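/- For integers $m \geq 1$ and $k \geq 0$, define $H_{m,k}(t) = \frac{1}{2^m (m+2k)!} \left(\frac{d}{dt}\right)^{m+2k}\left[(t^2-1)^m (t-1)^{2k}\right]$. Then for all real $i, j > 0$: $\int_0^\infty p_m(4\pi j y) e^{-4\pi (i+j) y} y^{m+2k}\,dy = \frac{(m+2k)!}{(4\pi(i+j))^{m+2k+1}} H_{m,k}\left(\frac{i-j}{i+j}\right)$, where $p_m(x) = \sum_{a=0}^m \binom{m}{a} \frac{(-x)^a}{a!}$. -/

import Mathlib

open Real MeasureTheory

/-- The polynomial `p_m(x) = ∑_{a=0}^m binom(m,a) (-x)^a / a!`. -/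
noncomputable def pPoly (m : ℕ) (x : ℝ) : ℝ :=
  ∑ a ∈ Finset.range (m + 1), (m.choose a : ℝ) * (-x) ^ a / (a.factorial : ℝ)

/-- `H_{m,k}(t) = 1/(2^m (m+2k)!) · (d/dt)^{m+2k} [(t²-1)^m (t-1)^{2k}]`. -/
noncomputable def Hpoly (m k : ℕ) (t : ℝ) : ℝ :=
  (1 / (2 ^ m * ((m + 2 * k).factorial : ℝ))) *
    iteratedDeriv (m + 2 * k) (fun s : ℝ => (s ^ 2 - 1) ^ m * (s - 1) ^ (2 * k)) t

lemma sumPow_iteratedDeriv (s : Finset ℕ) (c : ℕ → ℝ) (p : ℕ → ℕ) (n : ℕ) :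
    iteratedDeriv n (fun x : ℝ => ∑ a ∈ s, c a * (x - 1) ^ p a)
      = fun x => ∑ a ∈ s, c a * ((p a).descFactorial n : ℝ) * (x - 1) ^ (p a - n) := by
  induction n with
  | zero => simp
  | succ n ih =>
    rw [iteratedDeriv_succ, ih]
    funext x
    have h : HasDerivAt
        (fun x : ℝ => ∑ a ∈ s, c a * ((p a).descFactorial n : ℝ) * (x - 1) ^ (p a - n))
        (∑ a ∈ s, c a * ((p a).descFactorial (n + 1) : ℝ) * (x - 1) ^ (p a - (n + 1))) x := by
      refine HasDerivAt.fun_sum fun a _ => ?_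
      have h1 : HasDerivAt (fun x : ℝ => (x - 1) ^ (p a - n))
          (((p a - n : ℕ) : ℝ) * (x - 1) ^ (p a - n - 1) * 1) x :=
        ((hasDerivAt_id x).sub_const 1).pow _
      have h2 := h1.const_mul (c a * ((p a).descFactorial n : ℝ))
      refine h2.congr_deriv ?_
      rw [Nat.descFactorial_succ, Nat.sub_sub]
      push_cast
      ring
    exact h.deriv

lemma integrableOn_pow_exp (n : ℕ) {c : ℝ} (hc : 0 < c) :
    IntegrableOn (fun y : ℝ => y ^ n * Real.exp (-(c * y))) (Set.Ioi 0) := by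
  have h := integrableOn_rpow_mul_exp_neg_mul_rpow (s := (n : ℝ)) (p := 1)
    (by linarith [Nat.cast_nonneg (α := ℝ) n]) zero_lt_one hc
  refine h.congr_fun (fun x _ => ?_) measurableSet_Ioi
  dsimp only
  rw [Real.rpow_one, Real.rpow_natCast, neg_mul]

lemma integral_pow_exp (n : ℕ) {c : ℝ} (hc : 0 < c) :
    ∫ y in Set.Ioi (0 : ℝ), y ^ n * Real.exp (-(c * y))
      = (n.factorial : ℝ) / c ^ (n + 1) := by
  have h := Real.integral_rpow_mul_exp_neg_mul_Ioi (a := (n : ℝ) + 1) (by positivity) hc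
  rw [show ((n : ℝ) + 1) - 1 = (n : ℝ) by ring] at h
  have h2 : ∫ y in Set.Ioi (0 : ℝ), y ^ n * Real.exp (-(c * y))
      = ∫ t in Set.Ioi (0 : ℝ), t ^ ((n : ℝ)) * Real.exp (-(c * t)) := by
    refine setIntegral_congr_fun measurableSet_Ioi (fun t _ => ?_)
    rw [Real.rpow_natCast]
  rw [h2, h, Real.Gamma_nat_eq_factorial,
    show ((n : ℝ) + 1) = ((n + 1 : ℕ) : ℝ) by push_cast; ring, Real.rpow_natCast]
  rw [div_pow, one_pow]
  ring

theorem stmt0 (m k : ℕ) (hm : 1 ≤ m) (i j : ℝ) (hi : 0 < i) (hj : 0 < j) :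
    ∫ y in Set.Ioi (0 : ℝ),
        pPoly m (4 * π * j * y) * Real.exp (-(4 * π * (i + j) * y)) * y ^ (m + 2 * k)
      = ((m + 2 * k).factorial : ℝ) / (4 * π * (i + j)) ^ (m + 2 * k + 1)
          * Hpoly m k ((i - j) / (i + j)) := by
  have hπ := Real.pi_pos
  set N := m + 2 * k with hN
  have hij : 0 < i + j := by linarith
  have hc : 0 < 4 * π * (i + j) := by positivity
  -- LHS rewriting
  have hintegrand : ∀ y : ℝ,
      pPoly m (4 * π * j * y) * Real.exp (-(4 * π * (i + j) * y)) * y ^ N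
        = ∑ a ∈ Finset.range (m + 1),
            ((m.choose a : ℝ) * (-(4 * π * j)) ^ a / (a.factorial : ℝ)) *
              (y ^ (N + a) * Real.exp (-(4 * π * (i + j) * y))) := by
    intro y
    rw [pPoly, Finset.sum_mul, Finset.sum_mul]
    refine Finset.sum_congr rfl fun a _ => ?_
    rw [show -(4 * π * j * y) = (-(4 * π * j)) * y by ring, mul_pow, pow_add]
    ring
  rw [setIntegral_congr_fun measurableSet_Ioi (fun y _ => hintegrand y),
    integral_finset_sum _ (fun a _ => ((integrableOn_pow_exp (N + a) hc).const_mul _))]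
  simp_rw [integral_const_mul, integral_pow_exp _ hc]
  -- RHS: compute Hpoly
  have hfun : (fun s : ℝ => (s ^ 2 - 1) ^ m * (s - 1) ^ (2 * k))
      = fun x : ℝ => ∑ a ∈ Finset.range (m + 1),
          ((m.choose a : ℝ) * 2 ^ (m - a)) * (x - 1) ^ (N + a) := by
    funext x
    rw [show (x ^ 2 - 1 : ℝ) = (x - 1) * (x + 1) by ring, mul_pow,
      show (x + 1 : ℝ) = (x - 1) + 2 by ring, add_pow, Finset.mul_sum, Finset.sum_mul]
    refine Finset.sum_congr rfl fun a ha => ?_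
    rw [show N + a = m + a + 2 * k by omega, pow_add, pow_add]
    ring
  have hHval : Hpoly m k ((i - j) / (i + j))
      = (1 / (2 ^ m * (N.factorial : ℝ))) *
          ∑ a ∈ Finset.range (m + 1),
            ((m.choose a : ℝ) * 2 ^ (m - a)) * (((N + a).descFactorial N : ℝ)) *
              (((i - j) / (i + j) - 1)) ^ a := by
    rw [Hpoly, hfun, sumPow_iteratedDeriv]
    simp [Nat.add_sub_cancel_left, hN]
  rw [hHval, Finset.mul_sum, Finset.mul_sum]
  refine Finset.sum_congr rfl fun a ha => ?_
  have ham : a ≤ m := Nat.lt_succ_iff.mp (Finset.mem_range.mp ha)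
  have hdf : ((N + a).factorial : ℝ) = ((N + a).descFactorial N : ℝ) * (a.factorial : ℝ) := by
    have := Nat.factorial_mul_descFactorial (Nat.le_add_right N a)
    rw [Nat.add_sub_cancel_left] at this
    rw [mul_comm]
    exact_mod_cast this.symm
  have ht : (i - j) / (i + j) - 1 = -(2 * j) / (i + j) := by
    field_simp
    ring
  have h2pow : (2 : ℝ) ^ (m - a) = 2 ^ m / 2 ^ a := by
    rw [eq_div_iff (by positivity), ← pow_add, Nat.sub_add_cancel ham]
  rw [hdf, ht, div_pow, neg_pow (2 * j), neg_pow (4 * π * j), h2pow,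
    show N + a + 1 = (N + 1) + a by omega, pow_add, mul_pow (4 * π) (i + j),
    mul_pow (2 : ℝ) j, mul_pow (4 * π) j]
  have hfa : (a.factorial : ℝ) ≠ 0 := Nat.cast_ne_zero.mpr a.factorial_ne_zero
  have hfN : (N.factorial : ℝ) ≠ 0 := Nat.cast_ne_zero.mpr N.factorial_ne_zero
  have h4π : (4 * π : ℝ) ≠ 0 := by positivity
  have hijne : (i + j : ℝ) ≠ 0 := ne_of_gt hij
  field_simp
  rw [mul_pow (4 * π) (i + j) a]
  ring
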